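/- Let A be a uniform algebra on X = [0,1]. Suppose that A is 2-local on [0,1] and that [0,1] has a dense subset S such that every x ∈ S is a peak point for A at which A is strongly regular. Then A = C([0,1]). -/

import Mathlib

open Topology Filter


lemma unit_cut_cont (s : unitInterval) (g : C(unitInterval, ℂ)) :
    Continuous fun x : unitInterval => if (s:ℝ) ≤ (x:ℝ) then g x - g s else 0 := by
  apply Continuous.if_le (g.continuous.sub continuous_const) continuous_const
    continuous_const continuous_subtype_val
  intro x hx
  have hsx : s = x := Subtype.ext hx
  rw [hsx]
  exact sub_self _

noncomputable def cutCM (s : unitInterval) (g : C(unitInterval, ℂ)) : C(unitInterval, ℂ) :=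
  ⟨_, unit_cut_cont s g⟩

lemma cutCM_apply (s : unitInterval) (g : C(unitInterval, ℂ)) (x : unitInterval) :
    cutCM s g x = if (s:ℝ) ≤ (x:ℝ) then g x - g s else 0 := rfl

lemma cut_mem_of_vanish (A : Subalgebra ℂ C(unitInterval, ℂ))
    (h2 : ∀ f : C(unitInterval, ℂ), ∀ g₁ ∈ A, ∀ g₂ ∈ A,
      (∀ x : unitInterval, ∃ U ∈ 𝓝 x,
        (∀ y ∈ U, f y = g₁ y) ∨ (∀ y ∈ U, f y = g₂ y)) → f ∈ A)
    (s : unitInterval) (u : C(unitInterval, ℂ)) (hu : u ∈ A)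
    (hU : ∃ U ∈ 𝓝 s, ∀ y ∈ U, u y = 0) : cutCM s u ∈ A := by
  obtain ⟨U, hUn, hUv⟩ := hU
  have hus : u s = 0 := hUv s (mem_of_mem_nhds hUn)
  apply h2 (cutCM s u) u hu 0 (zero_mem A)
  intro x
  rcases lt_trichotomy (x:ℝ) (s:ℝ) with h | h | h
  · refine ⟨Subtype.val ⁻¹' Set.Iio (s:ℝ), (isOpen_Iio.preimage continuous_subtype_val).mem_nhds h,
      Or.inr ?_⟩
    intro y hy
    simp only [ContinuousMap.zero_apply, cutCM_apply]
    rw [if_neg (not_le.mpr hy)]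
  · have hx : x = s := Subtype.ext h
    subst hx
    refine ⟨U, hUn, Or.inl ?_⟩
    intro y hy
    rw [cutCM_apply]
    split
    · rw [hus, sub_zero]
    · exact (hUv y hy).symm
  · refine ⟨Subtype.val ⁻¹' Set.Ioi (s:ℝ), (isOpen_Ioi.preimage continuous_subtype_val).mem_nhds h,
      Or.inl ?_⟩
    intro y hy
    simp only [Set.mem_preimage, Set.mem_Ioi] at hy
    rw [cutCM_apply, if_pos hy.le, hus, sub_zero]

lemma cut_mem (A : Subalgebra ℂ C(unitInterval, ℂ))
    (hA : IsClosed (A : Set C(unitInterval, ℂ)))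
    (h2 : ∀ f : C(unitInterval, ℂ), ∀ g₁ ∈ A, ∀ g₂ ∈ A,
      (∀ x : unitInterval, ∃ U ∈ 𝓝 x,
        (∀ y ∈ U, f y = g₁ y) ∨ (∀ y ∈ U, f y = g₂ y)) → f ∈ A)
    (S : Set unitInterval)
    (hsr : ∀ x ∈ S, {f : C(unitInterval, ℂ) | f ∈ A ∧ f x = 0} ⊆
      closure {f : C(unitInterval, ℂ) | f ∈ A ∧ ∃ U ∈ 𝓝 x, ∀ y ∈ U, f y = 0})
    (s : unitInterval) (hs : s ∈ S)
    (g : C(unitInterval, ℂ)) (hg : g ∈ A) : cutCM s g ∈ A := by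
  set g' : C(unitInterval, ℂ) := g - algebraMap ℂ C(unitInterval, ℂ) (g s) with hg'def
  have hg'A : g' ∈ A := A.sub_mem hg (A.algebraMap_mem _)
  have hg'0 : g' s = 0 := by simp [hg'def, Algebra.algebraMap_eq_smul_one]
  have hcut_eq : cutCM s g = cutCM s g' := by
    ext x
    rw [cutCM_apply, cutCM_apply]
    split
    · simp [hg'def, Algebra.algebraMap_eq_smul_one]
    · rfl
  rw [hcut_eq]
  have hcl : g' ∈ closure {f : C(unitInterval, ℂ) | f ∈ A ∧ ∃ U ∈ 𝓝 s, ∀ y ∈ U, f y = 0} :=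
    hsr s hs ⟨hg'A, hg'0⟩
  obtain ⟨u, hum, hut⟩ := mem_closure_iff_seq_limit.mp hcl
  have hmem : ∀ n, cutCM s (u n) ∈ A := fun n =>
    cut_mem_of_vanish A h2 s (u n) (hum n).1 (hum n).2
  have hdist : ∀ n, dist (cutCM s (u n)) (cutCM s g') ≤ 2 * dist (u n) g' := by
    intro n
    rw [ContinuousMap.dist_le (by positivity)]
    intro x
    rw [cutCM_apply, cutCM_apply]
    split
    · calc dist (u n x - u n s) (g' x - g' s)
          ≤ dist (u n x) (g' x) + dist (u n s) (g' s) := dist_sub_sub_le _ _ _ _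
        _ ≤ dist (u n) g' + dist (u n) g' :=
            add_le_add (ContinuousMap.dist_apply_le_dist x) (ContinuousMap.dist_apply_le_dist s)
        _ = 2 * dist (u n) g' := by ring
    · simp only [dist_self]
      positivity
  have htend : Tendsto (fun n => cutCM s (u n)) atTop (𝓝 (cutCM s g')) := by
    rw [tendsto_iff_dist_tendsto_zero]
    have h0 : Tendsto (fun n => 2 * dist (u n) g') atTop (𝓝 0) := by
      have := (tendsto_iff_dist_tendsto_zero.mp hut).const_mul (2:ℝ)
      simpa using this
    exact squeeze_zero (fun n => dist_nonneg) hdist h0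
  exact hA.mem_of_tendsto htend (Filter.Eventually.of_forall hmem)

lemma step_exists (A : Subalgebra ℂ C(unitInterval, ℂ))
    (hA : IsClosed (A : Set C(unitInterval, ℂ)))
    (h2 : ∀ f : C(unitInterval, ℂ), ∀ g₁ ∈ A, ∀ g₂ ∈ A,
      (∀ x : unitInterval, ∃ U ∈ 𝓝 x,
        (∀ y ∈ U, f y = g₁ y) ∨ (∀ y ∈ U, f y = g₂ y)) → f ∈ A)
    (S : Set unitInterval)
    (hsr : ∀ x ∈ S, {f : C(unitInterval, ℂ) | f ∈ A ∧ f x = 0} ⊆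
      closure {f : C(unitInterval, ℂ) | f ∈ A ∧ ∃ U ∈ 𝓝 x, ∀ y ∈ U, f y = 0})
    (s : unitInterval) (hs : s ∈ S)
    (hpk : ∃ p ∈ A, p s = 1 ∧ ∀ t : unitInterval, t ≠ s → ‖p t‖ < 1)
    (a : unitInterval) (has : (a:ℝ) < (s:ℝ)) (ε : ℝ) (hε : 0 < ε) :
    ∃ E ∈ A, (∀ x, ‖E x‖ ≤ 1) ∧ (∀ x : unitInterval, (s:ℝ) ≤ (x:ℝ) → E x = 1) ∧
      (∀ x : unitInterval, (x:ℝ) ≤ (a:ℝ) → ‖E x‖ ≤ ε) := by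
  obtain ⟨p, hpA, hps, hplt⟩ := hpk
  have hple : ∀ x, ‖p x‖ ≤ 1 := by
    intro x
    rcases eq_or_ne x s with h | h
    · rw [h, hps]; simp
    · exact (hplt x h).le
  set K : Set unitInterval := Subtype.val ⁻¹' Set.Iic (a:ℝ) with hKdef
  have hKc : IsCompact K := (isClosed_Iic.preimage continuous_subtype_val).isCompact
  have hKne : K.Nonempty := ⟨a, by simp [hKdef]⟩
  obtain ⟨x₀, hx₀K, hx₀max⟩ := hKc.exists_isMaxOn hKne
    ((continuous_norm.comp p.continuous).continuousOn)
  set r : ℝ := ‖p x₀‖ with hrdef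
  have hx₀ne : x₀ ≠ s := by
    intro h
    have : (x₀:ℝ) ≤ (a:ℝ) := hx₀K
    rw [h] at this
    linarith
  have hr1 : r < 1 := hplt x₀ hx₀ne
  have hr0 : 0 ≤ r := norm_nonneg _
  obtain ⟨n, hn⟩ := exists_pow_lt_of_lt_one hε hr1
  set q : C(unitInterval, ℂ) := p ^ n with hqdef
  have hqA : q ∈ A := pow_mem hpA n
  have hq_apply : ∀ x, q x = (p x) ^ n := by
    intro x; simp [hqdef]
  have hqs : q s = 1 := by rw [hq_apply, hps, one_pow]
  refine ⟨q - cutCM s q, A.sub_mem hqA (cut_mem A hA h2 S hsr s hs q hqA), ?_, ?_, ?_⟩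
  · intro x
    simp only [ContinuousMap.sub_apply, cutCM_apply]
    split
    · rw [hqs]
      simp
    · rw [sub_zero, hq_apply, norm_pow]
      exact pow_le_one₀ (norm_nonneg _) (hple x)
  · intro x hx
    simp only [ContinuousMap.sub_apply, cutCM_apply, if_pos hx, hqs]
    ring
  · intro x hx
    have hns : ¬ ((s:ℝ) ≤ (x:ℝ)) := by linarith
    simp only [ContinuousMap.sub_apply, cutCM_apply, if_neg hns, sub_zero]
    rw [hq_apply, norm_pow]
    calc ‖p x‖ ^ n ≤ r ^ n := pow_le_pow_left₀ (norm_nonneg _) (hx₀max (by simpa [hKdef] using hx)) n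
      _ ≤ ε := hn.le


/-- Let `A` be a uniform algebra on `[0,1]` which is `2`-local on `[0,1]`, and suppose
`[0,1]` has a dense subset `S` of peak points for `A` at which `A` is strongly regular.
Then `A = C([0,1])`. -/
theorem stmt_8 (A : Subalgebra ℂ C(unitInterval, ℂ))
    (hA : IsClosed (A : Set C(unitInterval, ℂ)))
    (hsep : ∀ x y : unitInterval, x ≠ y → ∃ f ∈ A, f x ≠ f y)
    (h2 : ∀ f : C(unitInterval, ℂ), ∀ g₁ ∈ A, ∀ g₂ ∈ A,
      (∀ x : unitInterval, ∃ U ∈ 𝓝 x,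
        (∀ y ∈ U, f y = g₁ y) ∨ (∀ y ∈ U, f y = g₂ y)) → f ∈ A)
    (S : Set unitInterval) (hS : Dense S)
    (hpeak : ∀ x ∈ S, ∃ f ∈ A, f x = 1 ∧ ∀ t : unitInterval, t ≠ x → ‖f t‖ < 1)
    (hsr : ∀ x ∈ S, {f : C(unitInterval, ℂ) | f ∈ A ∧ f x = 0} ⊆
      closure {f : C(unitInterval, ℂ) | f ∈ A ∧ ∃ U ∈ 𝓝 x, ∀ y ∈ U, f y = 0}) :
    A = ⊤ := by
  have hTop : ∀ f : C(unitInterval, ℂ), f ∈ A := by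
    intro f
    have hcl : f ∈ closure (A : Set C(unitInterval, ℂ)) := by
      rw [Metric.mem_closure_iff]
      intro ε hε
      set ε' : ℝ := ε / 4 with hε'def
      have hε'pos : 0 < ε' := by positivity
      have huc : UniformContinuous f := CompactSpace.uniformContinuous_of_continuous f.continuous
      obtain ⟨δ, hδpos, hδ⟩ := Metric.uniformContinuous_iff.mp huc ε' hε'pos
      obtain ⟨n₀, hn₀⟩ := exists_nat_one_div_lt hδpos
      set N : ℕ := n₀ + 1 with hNdef
      have hNpos : (0:ℝ) < (N:ℝ) := by positivity
      have hδN : 1 / (N:ℝ) < δ := by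
        have : ((N:ℝ)) = (n₀:ℝ) + 1 := by push_cast [hNdef]; ring
        rw [this]; exact hn₀
      set t : ℕ → unitInterval := fun k =>
        ⟨min ((k:ℝ)/(N:ℝ)) 1, ⟨le_min (by positivity) zero_le_one, min_le_right _ _⟩⟩ with htdef
      have htval : ∀ k : ℕ, k ≤ N → ((t k : ℝ)) = (k:ℝ)/(N:ℝ) := by
        intro k hk
        simp only [htdef]
        exact min_eq_left ((div_le_one hNpos).mpr (by exact_mod_cast hk))
      have key : ∀ k : ℕ, k ≤ N → ∃ G ∈ A,
          (∀ x : unitInterval, (k:ℝ)/(N:ℝ) ≤ (x:ℝ) → G x = f (t k)) ∧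
          (∀ x : unitInterval, (x:ℝ) ≤ (k:ℝ)/(N:ℝ) → ‖G x - f x‖ ≤ 2*ε' + k*ε'/N) := by
        intro k
        induction k with
        | zero =>
          intro _
          refine ⟨algebraMap ℂ C(unitInterval, ℂ) (f (t 0)), A.algebraMap_mem _, ?_, ?_⟩
          · intro x _
            simp [Algebra.algebraMap_eq_smul_one]
          · intro x hx
            have hx0 : (x:ℝ) = 0 := le_antisymm (by simpa using hx) x.2.1
            have hxt : x = t 0 := by
              apply Subtype.ext
              rw [hx0, htval 0 (Nat.zero_le _)]
              simp
            rw [hxt]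
            simp [Algebra.algebraMap_eq_smul_one]
            positivity
        | succ k ih =>
          intro hk
          have hkN : k ≤ N := Nat.le_of_succ_le hk
          have hkN' : k < N := hk
          obtain ⟨G, hGA, ha, hb⟩ := ih hkN
          have hlt : (k:ℝ)/(N:ℝ) < ((k:ℝ)+1)/(N:ℝ) := by
            apply div_lt_div_of_pos_right ?_ hNpos
            linarith
          -- find s₀ ∈ S in the open interval
          set V : Set unitInterval := Subtype.val ⁻¹' Set.Ioo ((k:ℝ)/(N:ℝ)) (((k:ℝ)+1)/(N:ℝ))
            with hVdef
          have hVopen : IsOpen V := (isOpen_Ioo).preimage continuous_subtype_val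
          have hk1N : ((k:ℝ)+1)/(N:ℝ) ≤ 1 := by
            rw [div_le_one hNpos]
            exact_mod_cast hk
          set m : ℝ := ((k:ℝ)/(N:ℝ) + ((k:ℝ)+1)/(N:ℝ))/2 with hmdef
          have hm1 : (k:ℝ)/(N:ℝ) < m := by rw [hmdef]; linarith
          have hm2 : m < ((k:ℝ)+1)/(N:ℝ) := by rw [hmdef]; linarith
          have hmI : m ∈ unitInterval := by
            constructor
            · have : (0:ℝ) ≤ (k:ℝ)/(N:ℝ) := by positivity
              linarith
            · linarith
          have hVne : V.Nonempty := by
            refine ⟨⟨m, hmI⟩, ?_⟩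
            simp only [hVdef, Set.mem_preimage, Set.mem_Ioo]
            exact ⟨hm1, hm2⟩
          obtain ⟨s₀, hs₀S, hs₀V⟩ := hS.exists_mem_open hVopen hVne
          have hs₀lt : (k:ℝ)/(N:ℝ) < (s₀:ℝ) ∧ (s₀:ℝ) < ((k:ℝ)+1)/(N:ℝ) := by
            simpa [hVdef, Set.mem_preimage, Set.mem_Ioo] using hs₀V
          set Δ : ℂ := f (t (k+1)) - f (t k) with hΔdef
          have hΔ : ‖Δ‖ < ε' := by
            have hdist_t : dist (t (k+1)) (t k) < δ := by
              rw [Subtype.dist_eq, htval _ hk, htval _ hkN, Real.dist_eq]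
              have heq : ((k+1:ℕ):ℝ)/(N:ℝ) - (k:ℝ)/(N:ℝ) = 1/(N:ℝ) := by
                push_cast; ring
              rw [heq, abs_of_pos (by positivity)]
              exact hδN
            have := hδ hdist_t
            rwa [dist_eq_norm] at this
          set ε'' : ℝ := ε'/((N:ℝ)*(‖Δ‖+1)) with hε''def
          have hε''pos : 0 < ε'' := by
            rw [hε''def]
            positivity
          obtain ⟨E, hEA, hE1, hE2, hE3⟩ := step_exists A hA h2 S hsr s₀ hs₀S (hpeak s₀ hs₀S)
            (t k) (by rw [htval _ hkN]; exact hs₀lt.1) ε'' hε''pos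
          set G' : C(unitInterval, ℂ) := G + algebraMap ℂ C(unitInterval, ℂ) Δ * E with hG'def
          have hG'A : G' ∈ A := A.add_mem hGA (A.mul_mem (A.algebraMap_mem Δ) hEA)
          have hG'apply : ∀ x : unitInterval, G' x = G x + Δ * E x := by
            intro x
            simp [hG'def, Algebra.algebraMap_eq_smul_one]
          refine ⟨G', hG'A, ?_, ?_⟩
          · intro x hx
            have hx' : ((k:ℝ)+1)/(N:ℝ) ≤ (x:ℝ) := by exact_mod_cast hx
            have hGx : G x = f (t k) := ha x (le_trans hlt.le hx')
            have hEx : E x = 1 := hE2 x (le_trans hs₀lt.2.le hx')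
            rw [hG'apply, hGx, hEx, mul_one, hΔdef]
            ring
          · intro x hx
            have hx' : (x:ℝ) ≤ ((k:ℝ)+1)/(N:ℝ) := by exact_mod_cast hx
            rcases le_or_gt (x:ℝ) ((k:ℝ)/(N:ℝ)) with hc | hc
            · have h1 := hb x hc
              have h2' : ‖Δ * E x‖ ≤ ε'/(N:ℝ) := by
                rw [norm_mul]
                have hEx : ‖E x‖ ≤ ε'' := hE3 x (by rw [htval _ hkN]; exact hc)
                calc ‖Δ‖ * ‖E x‖ ≤ (‖Δ‖+1) * ε'' :=
                      mul_le_mul (by linarith) hEx (norm_nonneg _) (by positivity)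
                  _ = ε'/(N:ℝ) := by
                      rw [hε''def]
                      have hne : ‖Δ‖ + 1 ≠ 0 := by positivity
                      field_simp
              have hre : G' x - f x = (G x - f x) + Δ * E x := by rw [hG'apply]; ring
              rw [hre]
              calc ‖(G x - f x) + Δ * E x‖ ≤ ‖G x - f x‖ + ‖Δ * E x‖ := norm_add_le _ _
                _ ≤ (2*ε' + (k:ℝ)*ε'/(N:ℝ)) + ε'/(N:ℝ) := add_le_add h1 h2'
                _ = 2*ε' + ((k+1:ℕ):ℝ)*ε'/(N:ℝ) := by push_cast; ring
            · have hGx : G x = f (t k) := ha x hc.le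
              have hfx : ‖f (t k) - f x‖ ≤ ε' := by
                have habs : |(k:ℝ)/(N:ℝ) - (x:ℝ)| < δ := by
                  rw [abs_sub_comm, abs_of_nonneg (by linarith)]
                  have heq : ((k:ℝ)+1)/(N:ℝ) = (k:ℝ)/(N:ℝ) + 1/(N:ℝ) := by ring
                  rw [heq] at hx'
                  linarith
                have hdx : dist (t k) x < δ := by
                  rw [Subtype.dist_eq, htval _ hkN, Real.dist_eq]
                  exact habs
                have := hδ hdx
                rw [dist_eq_norm] at this
                exact this.le
              have hre : G' x - f x = (f (t k) - f x) + Δ * E x := by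
                rw [hG'apply, hGx]; ring
              rw [hre]
              have hnn : (0:ℝ) ≤ ((k+1:ℕ):ℝ)*ε'/(N:ℝ) := by positivity
              calc ‖(f (t k) - f x) + Δ * E x‖ ≤ ‖f (t k) - f x‖ + ‖Δ‖ * ‖E x‖ := by
                    rw [← norm_mul]; exact norm_add_le _ _
                _ ≤ ε' + ε' * 1 :=
                    add_le_add hfx (mul_le_mul hΔ.le (hE1 x) (norm_nonneg _) hε'pos.le)
                _ ≤ 2*ε' + ((k+1:ℕ):ℝ)*ε'/(N:ℝ) := by linarith
      obtain ⟨G, hGA, _, hGb⟩ := key N le_rfl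
      refine ⟨G, hGA, ?_⟩
      have hd : dist f G ≤ 3*ε' := by
        rw [ContinuousMap.dist_le (by positivity)]
        intro x
        have hx : (x:ℝ) ≤ (N:ℝ)/(N:ℝ) := by
          rw [div_self hNpos.ne']
          exact x.2.2
        have hGx := hGb x hx
        have hNN : (N:ℝ)*ε'/(N:ℝ) = ε' := by field_simp
        rw [dist_eq_norm, norm_sub_rev]
        linarith
      have h3 : 3*ε' < ε := by rw [hε'def]; linarith
      exact lt_of_le_of_lt hd h3
    rwa [hA.closure_eq] at hcl
  exact eq_top_iff.2 fun x _ => hTop x
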